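/- Let W be a nonnegative real random variable with 0<E[W]<∞ and E[W³]<∞, let q≥3 be an integer, fix B=0, and for β>0 write β'=e^β−1 and p_{β,0}(s)=E[log(e^{β'Ws}+q−1)] − (β'·E[W]/(2q))·[(q−1)s²+2s−1] for s∈[0,1]. Define 𝓕_0(t)=E[(W/E[W])·(e^{tW}−1)/(e^{tW}+q−1)] and t_conv = sup{s>0 : 𝓕_0 is convex on (0,s)}; then t_conv>0. There exists a critical value β_c∈(0,∞) such that: for every β∈(0,β_c), s=0 is the unique maximizer of p_{β,0} on [0,1]; and for every β>β_c, every maximizer s of p_{β,0} on [0,1] satisfies s ≥ t_conv/β' > 0. In particular β↦s*(β,0) (the optimal value) makes a jump at β_c, i.e., the annealed Potts model has a first-order phase transition at β_c. -/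

import Mathlib

set_option maxHeartbeats 1000000

open MeasureTheory Filter Topology Set



noncomputable def sg (a x : ℝ) : ℝ := Real.exp x / (Real.exp x + a)
noncomputable def sgd (a x : ℝ) : ℝ := a * Real.exp x / (Real.exp x + a) ^ 2
noncomputable def sgdd (a x : ℝ) : ℝ := a * Real.exp x * (a - Real.exp x) / (Real.exp x + a) ^ 3

variable {a x y : ℝ}

lemma den_pos (ha : 0 < a) : 0 < Real.exp x + a := by
  have := Real.exp_pos x; linarith

lemma hasDerivAt_lg (ha : 0 < a) (x : ℝ) :
    HasDerivAt (fun x => Real.log (Real.exp x + a)) (sg a x) x := by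
  have h := ((Real.hasDerivAt_exp x).add_const a).log (ne_of_gt (den_pos ha))
  simpa [sg] using h

lemma hasDerivAt_sg (ha : 0 < a) (x : ℝ) : HasDerivAt (sg a) (sgd a x) x := by
  have h := ((Real.hasDerivAt_exp x).div ((Real.hasDerivAt_exp x).add_const a)
    (ne_of_gt (den_pos ha)))
  refine h.congr_deriv ?_
  have h2 : Real.exp x + a ≠ 0 := ne_of_gt (den_pos ha)
  simp only [sgd]
  field_simp
  ring

lemma hasDerivAt_sgd (ha : 0 < a) (x : ℝ) : HasDerivAt (sgd a) (sgdd a x) x := by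
  have h := (((Real.hasDerivAt_exp x).const_mul a).div
    (((Real.hasDerivAt_exp x).add_const a).pow 2) (pow_ne_zero _ (ne_of_gt (den_pos ha))))
  refine h.congr_deriv ?_
  have h2 : Real.exp x + a ≠ 0 := ne_of_gt (den_pos ha)
  simp only [sgdd, Pi.pow_apply]
  field_simp
  ring

lemma sg_nonneg (ha : 0 < a) : 0 ≤ sg a x :=
  div_nonneg (Real.exp_pos x).le (den_pos ha).le

lemma sg_le_one (ha : 0 < a) : sg a x ≤ 1 := by
  rw [sg, div_le_one (den_pos ha)]; linarith [ha.le]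

lemma sgd_pos (ha : 0 < a) : 0 < sgd a x :=
  div_pos (mul_pos ha (Real.exp_pos x)) (pow_pos (den_pos ha) 2)

lemma sgd_le_quarter (ha : 0 < a) : sgd a x ≤ 1/4 := by
  rw [sgd, div_le_iff₀ (pow_pos (den_pos ha) 2)]
  nlinarith [sq_nonneg (Real.exp x - a), Real.exp_pos x]

lemma abs_sgdd_le (ha : 0 < a) : |sgdd a x| ≤ 1/4 := by
  have hd := den_pos (x := x) ha
  have he := Real.exp_pos x
  have key : sgdd a x = sgd a x * ((a - Real.exp x) / (Real.exp x + a)) := by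
    rw [sgdd, sgd, div_mul_div_comm, ← pow_succ]
  have h2 : |(a - Real.exp x) / (Real.exp x + a)| ≤ 1 := by
    rw [abs_div, abs_of_pos hd, div_le_one hd, abs_le]
    constructor <;> nlinarith
  calc |sgdd a x| = |sgd a x| * |(a - Real.exp x) / (Real.exp x + a)| := by
        rw [key, abs_mul]
  _ ≤ |sgd a x| * 1 := by
        exact mul_le_mul_of_nonneg_left h2 (abs_nonneg _)
  _ = sgd a x := by rw [mul_one, abs_of_pos (sgd_pos ha)]
  _ ≤ 1/4 := sgd_le_quarter ha

lemma sgdd_lower (ha : 2 ≤ a) (hx0 : 0 ≤ x) (hx1 : Real.exp x ≤ 3/2) :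
    1 / (32 * a) ≤ sgdd a x := by
  have ha0 : (0:ℝ) < a := by linarith
  have he1 : 1 ≤ Real.exp x := Real.one_le_exp hx0
  have hd := den_pos (x := x) ha0
  rw [sgdd, le_div_iff₀ (pow_pos hd 3), div_mul_eq_mul_div]
  rw [div_le_iff₀ (by linarith : (0:ℝ) < 32*a)]
  have h1 : a / 4 ≤ a - Real.exp x := by linarith
  have h2 : (Real.exp x + a)^3 ≤ 8 * a^3 := by
    have h2a : Real.exp x + a ≤ 2*a := by linarith
    calc (Real.exp x + a)^3 ≤ (2*a)^3 := pow_le_pow_left₀ hd.le h2a 3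
    _ = 8 * a^3 := by ring
  have e2 : a * 1 * (a/4) ≤ a * Real.exp x * (a - Real.exp x) := by
    have := mul_le_mul (mul_le_mul_of_nonneg_left he1 ha0.le) h1 (by linarith) (by positivity)
    linarith [this]
  have e4 : a*1*(a/4)*(32*a) ≤ a * Real.exp x * (a - Real.exp x) * (32*a) := by
    have h32 : (0:ℝ) < 32*a := by linarith
    exact mul_le_mul_of_nonneg_right e2 h32.le
  have e3 : a*1*(a/4)*(32*a) = 8*a^3 := by ring
  linarith

lemma sg_strictMono (ha : 0 < a) : StrictMono (sg a) := by
  intro x y hxy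
  have hx := den_pos (x := x) ha
  have hy := den_pos (x := y) ha
  rw [sg, sg, div_lt_div_iff₀ hx hy]
  have := Real.exp_lt_exp.2 hxy
  nlinarith

lemma sg_mono (ha : 0 < a) : Monotone (sg a) := (sg_strictMono ha).monotone

lemma exp_sub_one_le (x : ℝ) (hx : 0 ≤ x) : Real.exp x - 1 ≤ x * Real.exp x := by
  have h := Real.add_one_le_exp (-x)
  have hh : Real.exp (-x) * Real.exp x = 1 := by rw [← Real.exp_add]; simp
  nlinarith [Real.exp_pos x, Real.exp_pos (-x)]

lemma sg_le_linear (ha : 0 < a) (hx : 0 ≤ x) : sg a x ≤ 1 / (a + 1) + x := by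
  have hd := den_pos (x := x) ha
  have he := exp_sub_one_le x hx
  have ha1 : (0:ℝ) < a + 1 := by linarith
  rw [sg, div_le_iff₀ hd,
    show (1/(a+1) + x) = ((1 + x*(a+1))/(a+1)) by field_simp,
    div_mul_eq_mul_div, le_div_iff₀ ha1]
  nlinarith [mul_le_mul_of_nonneg_left he ha.le, mul_nonneg hx (Real.exp_pos x).le,
    mul_nonneg (mul_nonneg hx ha.le) ha.le]

lemma lg_ge (ha : 0 < a) (x : ℝ) : x ≤ Real.log (Real.exp x + a) := by
  calc x = Real.log (Real.exp x) := (Real.log_exp x).symm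
  _ ≤ _ := Real.log_le_log (Real.exp_pos x) (by linarith)

lemma lg_quad (ha : 0 < a) (hx : 0 ≤ x) :
    Real.log (Real.exp x + a) - Real.log (1 + a) ≤ x / (a + 1) + x ^ 2 / 2 := by
  have key : ∀ y : ℝ,
      HasDerivAt (fun y => y / (a+1) + y^2/2 - Real.log (Real.exp y + a))
        (1/(a+1) + y - sg a y) y := by
    intro y
    have h1 : HasDerivAt (fun y : ℝ => y/(a+1) + y^2/2) (1/(a+1) + y) y := by
      have := ((hasDerivAt_id y).div_const (a+1)).add ((hasDerivAt_pow 2 y).div_const 2)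
      refine this.congr_deriv ?_
      simp
    exact h1.sub (hasDerivAt_lg ha y)
  have mono : MonotoneOn (fun y => y / (a+1) + y^2/2 - Real.log (Real.exp y + a)) (Ici 0) := by
    apply monotoneOn_of_deriv_nonneg (convex_Ici 0)
    · exact fun y _ => ((key y).differentiableAt).continuousAt.continuousWithinAt
    · exact fun y _ => ((key y).differentiableAt).differentiableWithinAt
    · intro y hy
      rw [interior_Ici] at hy
      rw [(key y).deriv]
      have := sg_le_linear ha (le_of_lt hy)
      linarith
  have h0 := mono (self_mem_Ici) (mem_Ici.2 hx) hx
  norm_num at h0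
  linarith [h0]
lemma sg_cont (ha : 0 < a) : Continuous (sg a) :=
  Real.continuous_exp.div (Real.continuous_exp.add continuous_const)
    (fun x => ne_of_gt (den_pos ha))
lemma sgd_cont (ha : 0 < a) : Continuous (sgd a) :=
  (continuous_const.mul Real.continuous_exp).div
    ((Real.continuous_exp.add continuous_const).pow 2)
    (fun x => pow_ne_zero _ (ne_of_gt (den_pos ha)))
lemma sgdd_cont (ha : 0 < a) : Continuous (sgdd a) :=
  ((continuous_const.mul Real.continuous_exp).mul
    (continuous_const.sub Real.continuous_exp)).div
    ((Real.continuous_exp.add continuous_const).pow 3)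
    (fun x => pow_ne_zero _ (ne_of_gt (den_pos ha)))
lemma abs_lg_le (ha : 1 ≤ a) (x : ℝ) : |Real.log (Real.exp x + a)| ≤ |x| + a := by
  have ha0 : (0:ℝ) < a := by linarith
  have hd := den_pos (x := x) ha0
  rw [abs_le]
  constructor
  · have h1 : Real.log a ≤ Real.log (Real.exp x + a) :=
      Real.log_le_log ha0 (by linarith [Real.exp_pos x])
    have h2 : (0:ℝ) ≤ Real.log a := Real.log_nonneg ha
    have := abs_nonneg x
    linarith
  · have h1 : Real.exp x + a ≤ Real.exp |x| * (1 + a) := by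
      have : Real.exp x ≤ Real.exp |x| := Real.exp_le_exp.2 (le_abs_self x)
      have h2 : 1 ≤ Real.exp |x| := Real.one_le_exp (abs_nonneg x)
      nlinarith
    calc Real.log (Real.exp x + a) ≤ Real.log (Real.exp |x| * (1 + a)) :=
          Real.log_le_log hd h1
    _ = |x| + Real.log (1 + a) := by
          rw [Real.log_mul (Real.exp_pos _).ne' (by linarith), Real.log_exp]
    _ ≤ |x| + a := by
          have := Real.add_one_le_exp a
          have := Real.log_le_sub_one_of_pos (by linarith : (0:ℝ) < 1 + a)
          linarith

/-- The function `𝓕_0(t) = E[(W/E[W])·(e^{tW}−1)/(e^{tW}+q−1)]`. -/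
noncomputable def Ffun {Ω : Type*} [MeasurableSpace Ω] (μ : Measure Ω)
    (W : Ω → ℝ) (q : ℕ) (t : ℝ) : ℝ :=
  ∫ ω, (W ω / (∫ ω', W ω' ∂μ)) * (Real.exp (t * W ω) - 1) /
    (Real.exp (t * W ω) + q - 1) ∂μ

/-- The reduced zero-field pressure functional
`p_{β,0}(s) = E[log(e^{β'Ws}+q−1)] − (β'E[W]/(2q))·[(q−1)s²+2s−1]`, `β'=e^β−1`. -/
noncomputable def pfun {Ω : Type*} [MeasurableSpace Ω] (μ : Measure Ω)
    (W : Ω → ℝ) (q : ℕ) (β : ℝ) (s : ℝ) : ℝ :=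
  (∫ ω, Real.log (Real.exp ((Real.exp β - 1) * W ω * s) + q - 1) ∂μ)
    - (Real.exp β - 1) * (∫ ω, W ω ∂μ) / (2 * q) * ((q - 1) * s ^ 2 + 2 * s - 1)

/-- The threshold `t_conv = sup{s > 0 : 𝓕_0 is convex on (0,s)}`. -/
noncomputable def tconv {Ω : Type*} [MeasurableSpace Ω] (μ : Measure Ω)
    (W : Ω → ℝ) (q : ℕ) : ℝ :=
  sSup {s : ℝ | 0 < s ∧ ConvexOn ℝ (Ioo 0 s) (Ffun μ W q)}


section Int
variable {Ω : Type*} [MeasurableSpace Ω] (μ : Measure Ω) [IsProbabilityMeasure μ]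
  (W : Ω → ℝ) (q : ℕ)

noncomputable def Phi0 (t : ℝ) : ℝ := ∫ ω, Real.log (Real.exp (t * W ω) + ((q:ℝ) - 1)) ∂μ
noncomputable def Phi1 (t : ℝ) : ℝ := ∫ ω, W ω * sg ((q:ℝ)-1) (t * W ω) ∂μ
noncomputable def Phi2 (t : ℝ) : ℝ := ∫ ω, (W ω)^2 * sgd ((q:ℝ)-1) (t * W ω) ∂μ
noncomputable def Phi3 (t : ℝ) : ℝ := ∫ ω, (W ω)^3 * sgdd ((q:ℝ)-1) (t * W ω) ∂μ

variable {μ W q}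
variable (hWmeas : Measurable W) (hWnn : ∀ ω, 0 ≤ W ω) (hWint : Integrable W μ)
  (hW3 : Integrable (fun ω => (W ω) ^ 3) μ) (hq : 3 ≤ q)

lemma ha2' (hq : 3 ≤ q) : (2:ℝ) ≤ (q:ℝ) - 1 := by
  have : (3:ℝ) ≤ (q:ℝ) := by exact_mod_cast hq
  linarith

lemma ha0' (hq : 3 ≤ q) : (0:ℝ) < (q:ℝ) - 1 := by linarith [ha2' hq]

include hWmeas hWnn hWint hW3 in
lemma intW2 : Integrable (fun ω => (W ω)^2) μ := by
  apply Integrable.mono' (hWint.add hW3) ((hWmeas.pow_const 2).aestronglyMeasurable)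
  filter_upwards with ω
  have h := hWnn ω
  rw [Real.norm_eq_abs, abs_of_nonneg (by positivity)]
  simp only [Pi.add_apply]
  nlinarith [sq_nonneg (W ω - 1), sq_nonneg (W ω)]

include hWmeas hWnn hWint hq in
lemma int_Wsg (t : ℝ) : Integrable (fun ω => W ω * sg ((q:ℝ)-1) (t * W ω)) μ := by
  apply Integrable.mono' hWint
    ((hWmeas.mul (((sg_cont (ha0' hq)).measurable).comp (hWmeas.const_mul t))).aestronglyMeasurable)
  filter_upwards with ω
  simp only [Pi.mul_apply, Function.comp_apply]
  rw [Real.norm_eq_abs, abs_mul, abs_of_nonneg (hWnn ω), abs_of_nonneg (sg_nonneg (ha0' hq))]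
  calc W ω * sg ((q:ℝ)-1) (t * W ω) ≤ W ω * 1 :=
    mul_le_mul_of_nonneg_left (sg_le_one (ha0' hq)) (hWnn ω)
  _ = W ω := mul_one _

include hWmeas hWnn hWint hW3 hq in
lemma int_W2sgd (t : ℝ) : Integrable (fun ω => (W ω)^2 * sgd ((q:ℝ)-1) (t * W ω)) μ := by
  apply Integrable.mono' (intW2 hWmeas hWnn hWint hW3)
    (((hWmeas.pow_const 2).mul
      (((sgd_cont (ha0' hq)).measurable).comp (hWmeas.const_mul t))).aestronglyMeasurable)
  filter_upwards with ω
  simp only [Pi.mul_apply, Function.comp_apply]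
  rw [Real.norm_eq_abs, abs_mul, abs_of_nonneg (by positivity : (0:ℝ) ≤ (W ω)^2),
    abs_of_nonneg (sgd_pos (ha0' hq)).le]
  calc (W ω)^2 * sgd ((q:ℝ)-1) (t * W ω) ≤ (W ω)^2 * 1 :=
    mul_le_mul_of_nonneg_left ((sgd_le_quarter (ha0' hq)).trans (by norm_num)) (by positivity)
  _ = (W ω)^2 := mul_one _

include hWmeas hWnn hW3 hq in
lemma int_W3sgdd (t : ℝ) : Integrable (fun ω => (W ω)^3 * sgdd ((q:ℝ)-1) (t * W ω)) μ := by
  apply Integrable.mono' hW3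
    (((hWmeas.pow_const 3).mul
      (((sgdd_cont (ha0' hq)).measurable).comp (hWmeas.const_mul t))).aestronglyMeasurable)
  filter_upwards with ω
  have h := hWnn ω
  simp only [Pi.mul_apply, Function.comp_apply]
  rw [Real.norm_eq_abs, abs_mul, abs_of_nonneg (by positivity : (0:ℝ) ≤ (W ω)^3)]
  calc (W ω)^3 * |sgdd ((q:ℝ)-1) (t * W ω)| ≤ (W ω)^3 * 1 :=
    mul_le_mul_of_nonneg_left ((abs_sgdd_le (ha0' hq)).trans (by norm_num)) (by positivity)
  _ = (W ω)^3 := mul_one _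

include hWmeas hWnn hWint hq in
lemma int_lg (t : ℝ) :
    Integrable (fun ω => Real.log (Real.exp (t * W ω) + ((q:ℝ) - 1))) μ := by
  have ha := ha0' hq
  apply Integrable.mono' ((hWint.const_mul |t|).add (integrable_const ((q:ℝ)-1)))
  · apply Measurable.aestronglyMeasurable
    apply Measurable.log
    exact (Real.measurable_exp.comp (hWmeas.const_mul t)).add_const _
  filter_upwards with ω
  have h := abs_lg_le (by linarith [ha2' hq] : (1:ℝ) ≤ (q:ℝ)-1) (t * W ω)
  rw [Real.norm_eq_abs]
  calc |Real.log (Real.exp (t * W ω) + ((q:ℝ)-1))| ≤ |t * W ω| + ((q:ℝ)-1) := h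
  _ ≤ |t| * W ω + ((q:ℝ)-1) := by rw [abs_mul, abs_of_nonneg (hWnn ω)]

include hWmeas hWnn hWint hq in
lemma hasPhi0 (t : ℝ) : HasDerivAt (Phi0 μ W q) (Phi1 μ W q t) t := by
  have ha := ha0' hq
  have key := hasDerivAt_integral_of_dominated_loc_of_deriv_le (μ := μ)
    (F := fun t ω => Real.log (Real.exp (t * W ω) + ((q:ℝ)-1)))
    (F' := fun t ω => W ω * sg ((q:ℝ)-1) (t * W ω))
    (bound := W) (Metric.ball_mem_nhds t zero_lt_one)
    (Eventually.of_forall fun t => (int_lg hWmeas hWnn hWint hq t).aestronglyMeasurable)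
    (int_lg hWmeas hWnn hWint hq t)
    (int_Wsg hWmeas hWnn hWint hq t).aestronglyMeasurable
    ?_ hWint ?_
  · exact key.2
  · filter_upwards with ω t' _
    rw [Real.norm_eq_abs, abs_mul, abs_of_nonneg (hWnn ω), abs_of_nonneg (sg_nonneg ha)]
    calc W ω * sg ((q:ℝ)-1) (t' * W ω) ≤ W ω * 1 :=
      mul_le_mul_of_nonneg_left (sg_le_one ha) (hWnn ω)
    _ = W ω := mul_one _
  · filter_upwards with ω t' _
    have h1 := (hasDerivAt_lg ha (t' * W ω)).comp t' (hasDerivAt_mul_const (W ω))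
    exact h1.congr_deriv (mul_comm _ _)

include hWmeas hWnn hWint hW3 hq in
lemma hasPhi1 (t : ℝ) : HasDerivAt (Phi1 μ W q) (Phi2 μ W q t) t := by
  have ha := ha0' hq
  have key := hasDerivAt_integral_of_dominated_loc_of_deriv_le (μ := μ)
    (F := fun t ω => W ω * sg ((q:ℝ)-1) (t * W ω))
    (F' := fun t ω => (W ω)^2 * sgd ((q:ℝ)-1) (t * W ω))
    (bound := fun ω => (W ω)^2) (Metric.ball_mem_nhds t zero_lt_one)
    (Eventually.of_forall fun t => (int_Wsg hWmeas hWnn hWint hq t).aestronglyMeasurable)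
    (int_Wsg hWmeas hWnn hWint hq t)
    (int_W2sgd hWmeas hWnn hWint hW3 hq t).aestronglyMeasurable
    ?_ (intW2 hWmeas hWnn hWint hW3) ?_
  · exact key.2
  · filter_upwards with ω t' _
    rw [Real.norm_eq_abs, abs_mul, abs_of_nonneg (by positivity : (0:ℝ) ≤ (W ω)^2),
      abs_of_nonneg (sgd_pos ha).le]
    calc (W ω)^2 * sgd ((q:ℝ)-1) (t' * W ω) ≤ (W ω)^2 * 1 :=
      mul_le_mul_of_nonneg_left ((sgd_le_quarter ha).trans (by norm_num)) (by positivity)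
    _ = (W ω)^2 := mul_one _
  · filter_upwards with ω t' _
    have h1 := ((hasDerivAt_sg ha (t' * W ω)).comp t'
      (hasDerivAt_mul_const (W ω))).const_mul (W ω)
    have : W ω * (sgd ((q:ℝ)-1) (t' * W ω) * W ω) = (W ω)^2 * sgd ((q:ℝ)-1) (t' * W ω) := by
      ring
    exact h1.congr_deriv this

include hWmeas hWnn hWint hW3 hq in
lemma hasPhi2 (t : ℝ) : HasDerivAt (Phi2 μ W q) (Phi3 μ W q t) t := by
  have ha := ha0' hq
  have key := hasDerivAt_integral_of_dominated_loc_of_deriv_le (μ := μ)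
    (F := fun t ω => (W ω)^2 * sgd ((q:ℝ)-1) (t * W ω))
    (F' := fun t ω => (W ω)^3 * sgdd ((q:ℝ)-1) (t * W ω))
    (bound := fun ω => (W ω)^3) (Metric.ball_mem_nhds t zero_lt_one)
    (Eventually.of_forall fun t => (int_W2sgd hWmeas hWnn hWint hW3 hq t).aestronglyMeasurable)
    (int_W2sgd hWmeas hWnn hWint hW3 hq t)
    (int_W3sgdd hWmeas hWnn hW3 hq t).aestronglyMeasurable
    ?_ hW3 ?_
  · exact key.2
  · filter_upwards with ω t' _
    have h := hWnn ω
    rw [Real.norm_eq_abs, abs_mul, abs_of_nonneg (by positivity : (0:ℝ) ≤ (W ω)^3)]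
    calc (W ω)^3 * |sgdd ((q:ℝ)-1) (t' * W ω)| ≤ (W ω)^3 * 1 :=
      mul_le_mul_of_nonneg_left ((abs_sgdd_le ha).trans (by norm_num)) (by positivity)
    _ = (W ω)^3 := mul_one _
  · filter_upwards with ω t' _
    have h1 := ((hasDerivAt_sgd ha (t' * W ω)).comp t'
      (hasDerivAt_mul_const (W ω))).const_mul ((W ω)^2)
    have : (W ω)^2 * (sgdd ((q:ℝ)-1) (t' * W ω) * W ω) = (W ω)^3 * sgdd ((q:ℝ)-1) (t' * W ω) := by
      ring
    exact h1.congr_deriv this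

include hq in
lemma Phi0_zero : Phi0 μ W q 0 = Real.log q := by
  have : ∀ ω, Real.log (Real.exp ((0:ℝ) * W ω) + ((q:ℝ) - 1)) = Real.log q := by
    intro ω; norm_num
  rw [Phi0]
  simp only [this]
  simp

include hWnn hWint in
lemma suppW_pos (hEW : 0 < ∫ ω, W ω ∂μ) : 0 < μ {ω | 0 < W ω} := by
  have h := (integral_pos_iff_support_of_nonneg hWnn hWint).1 hEW
  have : Function.support W = {ω | 0 < W ω} := by
    ext ω
    simp only [Function.mem_support, Set.mem_setOf_eq]
    constructor
    · intro h2; exact lt_of_le_of_ne (hWnn ω) (Ne.symm h2)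
    · intro h2; exact ne_of_gt h2
  rwa [this] at h


lemma int_pos_of (hsupp : 0 < μ {ω | 0 < W ω}) {g : Ω → ℝ} (hg : Integrable g μ)
    (hnn : ∀ ω, 0 ≤ g ω) (hpos : ∀ ω, 0 < W ω → 0 < g ω) : 0 < ∫ ω, g ω ∂μ := by
  rw [integral_pos_iff_support_of_nonneg hnn hg]
  refine lt_of_lt_of_le hsupp (measure_mono ?_)
  intro ω hω
  exact ne_of_gt (hpos ω hω)

include hWmeas hWnn hWint hq in
lemma Phi1_strictMono (hsupp : 0 < μ {ω | 0 < W ω}) : StrictMono (Phi1 μ W q) := by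
  have ha := ha0' hq
  intro t₁ t₂ h
  have key : 0 < ∫ ω, (W ω * sg ((q:ℝ)-1) (t₂ * W ω) - W ω * sg ((q:ℝ)-1) (t₁ * W ω)) ∂μ := by
    apply int_pos_of hsupp ((int_Wsg hWmeas hWnn hWint hq t₂).sub (int_Wsg hWmeas hWnn hWint hq t₁))
    · intro ω
      simp only [Pi.sub_apply]
      have h1 : t₁ * W ω ≤ t₂ * W ω := mul_le_mul_of_nonneg_right h.le (hWnn ω)
      have h2 := (sg_strictMono ha).monotone h1
      have := hWnn ω
      nlinarith
    · intro ω hω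
      simp only [Pi.sub_apply]
      have h1 : t₁ * W ω < t₂ * W ω := mul_lt_mul_of_pos_right h hω
      have h2 := sg_strictMono ha h1
      nlinarith
  rw [integral_sub (int_Wsg hWmeas hWnn hWint hq t₂) (int_Wsg hWmeas hWnn hWint hq t₁)] at key
  have : Phi1 μ W q t₂ - Phi1 μ W q t₁ > 0 := key
  linarith [this]

include hWmeas hWnn hWint hq in
lemma Ffun_eq (hEW : 0 < ∫ ω, W ω ∂μ) (t : ℝ) :
    Ffun μ W q t = ((q:ℝ)/(((q:ℝ)-1) * (∫ ω, W ω ∂μ))) * Phi1 μ W q t - 1/((q:ℝ)-1) := by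
  have ha := ha0' hq
  have hEne : (∫ ω, W ω ∂μ) ≠ 0 := ne_of_gt hEW
  have hane : ((q:ℝ)-1) ≠ 0 := ne_of_gt ha
  have key : ∀ ω : Ω, W ω / (∫ ω', W ω' ∂μ) * (Real.exp (t * W ω) - 1) /
      (Real.exp (t * W ω) + (q:ℝ) - 1)
      = ((q:ℝ)/(((q:ℝ)-1) * (∫ ω, W ω ∂μ))) * (W ω * sg ((q:ℝ)-1) (t * W ω))
        - (1/(((q:ℝ)-1) * (∫ ω, W ω ∂μ))) * W ω := by
    intro ω
    have hd : (0:ℝ) < Real.exp (t * W ω) + ((q:ℝ)-1) := den_pos ha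
    have hd' : Real.exp (t * W ω) + (q:ℝ) - 1 ≠ 0 := by
      intro hc; rw [add_sub_assoc] at hc; linarith [hd]
    rw [sg, add_sub_assoc]
    field_simp
    ring
  rw [Ffun]
  simp only [key]
  have i5 : Integrable (fun ω => ((q:ℝ)/(((q:ℝ)-1) * (∫ ω, W ω ∂μ))) * (W ω * sg ((q:ℝ)-1) (t * W ω))) μ :=
    (int_Wsg hWmeas hWnn hWint hq t).const_mul _
  have i6 : Integrable (fun ω => (1/(((q:ℝ)-1) * (∫ ω, W ω ∂μ))) * W ω) μ :=
    hWint.const_mul _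
  rw [integral_sub i5 i6, integral_const_mul, integral_const_mul]
  rw [Phi1]
  generalize (∫ ω, W ω * sg ((q:ℝ)-1) (t * W ω) ∂μ) = P
  field_simp

include hWmeas hWnn hWint hq in
lemma pfun_eq (β s : ℝ) :
    pfun μ W q β s = Phi0 μ W q ((Real.exp β - 1) * s)
      - (Real.exp β - 1) * (∫ ω, W ω ∂μ) / (2 * q) * (((q:ℝ) - 1) * s ^ 2 + 2 * s - 1) := by
  have key : ∀ ω : Ω, Real.log (Real.exp ((Real.exp β - 1) * W ω * s) + (q:ℝ) - 1)
      = Real.log (Real.exp (((Real.exp β - 1) * s) * W ω) + ((q:ℝ) - 1)) := by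
    intro ω
    rw [mul_right_comm, add_sub_assoc]
  rw [pfun, Phi0]
  simp only [key]

include hWmeas hWnn hWint hW3 hq in
lemma Phi0_quad (t : ℝ) (ht : 0 ≤ t) :
    Phi0 μ W q t ≤ Real.log q + t/q * (∫ ω, W ω ∂μ) + t^2/2 * (∫ ω, (W ω)^2 ∂μ) := by
  have ha := ha0' hq
  have hqcast : ((q:ℝ)-1) + 1 = (q:ℝ) := by ring
  have key : ∀ ω : Ω, Real.log (Real.exp (t * W ω) + ((q:ℝ) - 1))
      ≤ Real.log q + t/q * W ω + t^2/2 * (W ω)^2 := by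
    intro ω
    have hx : 0 ≤ t * W ω := mul_nonneg ht (hWnn ω)
    have h := lg_quad ha hx
    have h1 : Real.log (1 + ((q:ℝ)-1)) = Real.log q := by norm_num
    rw [h1] at h
    rw [hqcast] at h
    have e1 : t * W ω / (q:ℝ) = t/q * W ω := by ring
    have e2 : (t * W ω)^2/2 = t^2/2 * (W ω)^2 := by ring
    rw [e1, e2] at h
    linarith
  have i3 : Integrable (fun a => t/q * W a) μ := hWint.const_mul _
  have i4 : Integrable (fun a => t^2/2 * (W a)^2) μ :=
    (intW2 hWmeas hWnn hWint hW3).const_mul _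
  have i1 : Integrable (fun a => Real.log q + t/q * W a) μ := (integrable_const _).add i3
  have hint2 : Integrable (fun ω => Real.log q + t/q * W ω + t^2/2 * (W ω)^2) μ := i1.add i4
  have := integral_mono (int_lg hWmeas hWnn hWint hq t) hint2 key
  rw [Phi0]
  refine this.trans (le_of_eq ?_)
  rw [integral_add i1 i4, integral_add (integrable_const _) i3,
    integral_const_mul, integral_const_mul, integral_const]
  simp

include hWmeas hWnn hWint hq in
lemma Phi0_ge (t : ℝ) : t * (∫ ω, W ω ∂μ) ≤ Phi0 μ W q t := by
  have ha := ha0' hq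
  have key : ∀ ω : Ω, t * W ω ≤ Real.log (Real.exp (t * W ω) + ((q:ℝ) - 1)) :=
    fun ω => lg_ge ha _
  have := integral_mono (hWint.const_mul t) (int_lg hWmeas hWnn hWint hq t) key
  rwa [integral_const_mul] at this

include hWmeas hWnn hWint hq in
lemma Ffun_zero : Ffun μ W q 0 = 0 := by
  simp [Ffun]

include hWmeas hWnn hWint hq in
lemma int_ffun (hEW : 0 < ∫ ω, W ω ∂μ) (t : ℝ) :
    Integrable (fun ω => W ω / (∫ ω', W ω' ∂μ) * (Real.exp (t * W ω) - 1) /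
      (Real.exp (t * W ω) + q - 1)) μ := by
  have ha := ha0' hq
  have hEne : (∫ ω, W ω ∂μ) ≠ 0 := ne_of_gt hEW
  have key : ∀ ω : Ω, ((q:ℝ)/(((q:ℝ)-1) * (∫ ω, W ω ∂μ))) * (W ω * sg ((q:ℝ)-1) (t * W ω))
        - (1/(((q:ℝ)-1) * (∫ ω, W ω ∂μ))) * W ω
      = W ω / (∫ ω', W ω' ∂μ) * (Real.exp (t * W ω) - 1) / (Real.exp (t * W ω) + (q:ℝ) - 1) := by
    intro ω
    have hd : (0:ℝ) < Real.exp (t * W ω) + ((q:ℝ)-1) := den_pos ha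
    have hd' : Real.exp (t * W ω) + (q:ℝ) - 1 ≠ 0 := by
      intro hc; rw [add_sub_assoc] at hc; linarith [hd]
    rw [sg, add_sub_assoc]
    field_simp
    ring
  have := (((int_Wsg hWmeas hWnn hWint hq t).const_mul
      ((q:ℝ)/(((q:ℝ)-1) * (∫ ω, W ω ∂μ)))).sub
      (hWint.const_mul (1/(((q:ℝ)-1) * (∫ ω, W ω ∂μ)))))
  exact this.congr (Eventually.of_forall key)

include hWmeas hWnn hWint hq in
lemma Ffun_lt_one (hEW : 0 < ∫ ω, W ω ∂μ) (hsupp : 0 < μ {ω | 0 < W ω}) (t : ℝ) :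
    Ffun μ W q t < 1 := by
  have ha := ha0' hq
  have hEne : (∫ ω, W ω ∂μ) ≠ 0 := ne_of_gt hEW
  have h1 : (∫ ω, W ω / (∫ ω', W ω' ∂μ) ∂μ) = 1 := by
    rw [integral_div]
    field_simp
  have key : 0 < ∫ ω, (W ω / (∫ ω', W ω' ∂μ)
      - W ω / (∫ ω', W ω' ∂μ) * (Real.exp (t * W ω) - 1) / (Real.exp (t * W ω) + q - 1)) ∂μ := by
    apply int_pos_of hsupp ((hWint.div_const _).sub (int_ffun hWmeas hWnn hWint hq hEW t))
    · intro ω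
      simp only [Pi.sub_apply]
      have hd : (0:ℝ) < Real.exp (t * W ω) + ((q:ℝ)-1) := den_pos ha
      have hd2 : (0:ℝ) < Real.exp (t * W ω) + (q:ℝ) - 1 := by rw [add_sub_assoc]; exact hd
      have hWE : 0 ≤ W ω / (∫ ω', W ω' ∂μ) := div_nonneg (hWnn ω) hEW.le
      rw [sub_nonneg, div_le_iff₀ hd2]
      have h2 : (Real.exp (t * W ω) - 1) ≤ Real.exp (t * W ω) + (q:ℝ) - 1 := by
        linarith [ha]
      exact mul_le_mul_of_nonneg_left h2 hWE
    · intro ω hω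
      simp only [Pi.sub_apply]
      have hd : (0:ℝ) < Real.exp (t * W ω) + ((q:ℝ)-1) := den_pos ha
      have hd2 : (0:ℝ) < Real.exp (t * W ω) + (q:ℝ) - 1 := by rw [add_sub_assoc]; exact hd
      have hWE : 0 < W ω / (∫ ω', W ω' ∂μ) := div_pos hω hEW
      rw [sub_pos, div_lt_iff₀ hd2]
      have h2 : (Real.exp (t * W ω) - 1) < Real.exp (t * W ω) + (q:ℝ) - 1 := by
        linarith [ha]
      exact mul_lt_mul_of_pos_left h2 hWE
  rw [integral_sub (hWint.div_const _) (int_ffun hWmeas hWnn hWint hq hEW t), h1] at key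
  have : Ffun μ W q t = ∫ ω, W ω / (∫ ω', W ω' ∂μ) * (Real.exp (t * W ω) - 1) /
      (Real.exp (t * W ω) + q - 1) ∂μ := rfl
  linarith [key, this ▸ (le_refl (Ffun μ W q t))]

include hWmeas hWnn hWint hq in
lemma Ffun_pos (hEW : 0 < ∫ ω, W ω ∂μ) (hsupp : 0 < μ {ω | 0 < W ω}) {t : ℝ} (ht : 0 < t) :
    0 < Ffun μ W q t := by
  have ha := ha0' hq
  rw [Ffun]
  apply int_pos_of hsupp (int_ffun hWmeas hWnn hWint hq hEW t)
  · intro ω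
    have hd : (0:ℝ) < Real.exp (t * W ω) + ((q:ℝ)-1) := den_pos ha
    have hd2 : (0:ℝ) < Real.exp (t * W ω) + (q:ℝ) - 1 := by rw [add_sub_assoc]; exact hd
    have hWE : 0 ≤ W ω / (∫ ω', W ω' ∂μ) := div_nonneg (hWnn ω) hEW.le
    have hx : 0 ≤ t * W ω := mul_nonneg ht.le (hWnn ω)
    have h2 : (0:ℝ) ≤ Real.exp (t * W ω) - 1 := by
      linarith [Real.one_le_exp hx]
    positivity
  · intro ω hω
    have hd : (0:ℝ) < Real.exp (t * W ω) + ((q:ℝ)-1) := den_pos ha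
    have hd2 : (0:ℝ) < Real.exp (t * W ω) + (q:ℝ) - 1 := by rw [add_sub_assoc]; exact hd
    have hWE : 0 < W ω / (∫ ω', W ω' ∂μ) := div_pos hω hEW
    have hx : 0 < t * W ω := mul_pos ht hω
    have h2 : (0:ℝ) < Real.exp (t * W ω) - 1 := by
      have := Real.exp_lt_exp.2 hx
      simp only [Real.exp_zero] at this
      linarith [Real.exp_zero ▸ Real.exp_lt_exp.2 hx]
    positivity

include hWmeas hWnn hWint hW3 hq in
lemma Ffun_cont (hEW : 0 < ∫ ω, W ω ∂μ) : Continuous (Ffun μ W q) := by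
  have hrepr : Ffun μ W q = fun t =>
      ((q:ℝ)/(((q:ℝ)-1) * (∫ ω, W ω ∂μ))) * Phi1 μ W q t - 1/((q:ℝ)-1) :=
    funext (Ffun_eq hWmeas hWnn hWint hq hEW)
  rw [hrepr]
  have hc : Continuous (Phi1 μ W q) := by
    have : Differentiable ℝ (Phi1 μ W q) :=
      fun t => (hasPhi1 hWmeas hWnn hWint hW3 hq t).differentiableAt
    exact this.continuous
  exact (continuous_const.mul hc).sub continuous_const

include hWmeas hWnn hW3 in
lemma tail_small {ε : ℝ} (hε : 0 < ε) :
    ∃ M : ℕ, 1 ≤ M ∧ ∫ ω in {ω | (M:ℝ) < W ω}, (W ω)^3 ∂μ < ε := by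
  have hmeas : ∀ n : ℕ, MeasurableSet {ω | (n:ℝ) < W ω} :=
    fun n => measurableSet_lt measurable_const hWmeas
  have T : Tendsto (fun n : ℕ => ∫ ω, Set.indicator {ω | (n:ℝ) < W ω}
      (fun ω => (W ω)^3) ω ∂μ) atTop (nhds (∫ ω, (0:ℝ) ∂μ)) := by
    apply tendsto_integral_of_dominated_convergence (fun ω => (W ω)^3)
    · intro n
      exact (hW3.aestronglyMeasurable.indicator (hmeas n))
    · exact hW3
    · intro n
      filter_upwards with ω
      rw [Real.norm_eq_abs]
      by_cases h : ω ∈ {ω | (n:ℝ) < W ω}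
      · rw [Set.indicator_of_mem h]
        exact le_of_eq (abs_of_nonneg (pow_nonneg (hWnn ω) 3))
      · rw [Set.indicator_of_notMem h]
        simp only [abs_zero]
        exact pow_nonneg (hWnn ω) 3
    · filter_upwards with ω
      apply tendsto_const_nhds.congr'
      filter_upwards [eventually_ge_atTop (Nat.ceil (W ω))] with n hn
      rw [Set.indicator_of_notMem]
      simp only [Set.mem_setOf_eq, not_lt]
      calc W ω ≤ (Nat.ceil (W ω) : ℝ) := Nat.le_ceil _
      _ ≤ (n : ℝ) := by exact_mod_cast hn
  rw [integral_zero] at T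
  have hev := (T.eventually (eventually_lt_nhds hε)).and (eventually_ge_atTop 1)
  obtain ⟨n, hn, hn1⟩ := hev.exists
  refine ⟨n, hn1, ?_⟩
  rwa [← integral_indicator (hmeas n)]

include hWmeas hWnn hWint hW3 hq in
lemma Phi3_nonneg_near (hsupp : 0 < μ {ω | 0 < W ω}) :
    ∃ δ : ℝ, 0 < δ ∧ ∀ t : ℝ, 0 ≤ t → t ≤ δ → 0 ≤ Phi3 μ W q t := by
  set a := (q:ℝ) - 1 with ha_def
  have ha := ha0' hq
  have ha2 := ha2' hq
  set c : ℝ := 1 / (32 * a) with hc_def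
  have hcpos : 0 < c := div_pos one_pos (by linarith)
  have hE3 : 0 < ∫ ω, (W ω)^3 ∂μ := by
    apply int_pos_of hsupp hW3 (fun ω => pow_nonneg (hWnn ω) 3)
    intro ω hω; exact pow_pos hω 3
  set E3 := ∫ ω, (W ω)^3 ∂μ
  set ε : ℝ := c * E3 / (c + 1) with hε_def
  have hεpos : 0 < ε := div_pos (mul_pos hcpos hE3) (by linarith)
  obtain ⟨M, hM1, hMtail⟩ := tail_small hWmeas hWnn hW3 hεpos
  have hM0 : (0:ℝ) < (M:ℝ) := by exact_mod_cast hM1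
  refine ⟨Real.log (3/2) / M, div_pos (Real.log_pos (by norm_num)) hM0, ?_⟩
  intro t ht0 htδ
  have hA : MeasurableSet {ω | W ω ≤ (M:ℝ)} := measurableSet_le hWmeas measurable_const
  have hAc : {ω | W ω ≤ (M:ℝ)}ᶜ = {ω | (M:ℝ) < W ω} := by
    ext ω; simp [not_le]
  have hint := int_W3sgdd hWmeas hWnn hW3 hq t
  have hsplit := (integral_add_compl hA hint).symm
  rw [Phi3] at *
  -- lower bound on A
  have hIA : IntegrableOn (fun ω => (W ω)^3 * sgdd a (t * W ω)) {ω | W ω ≤ (M:ℝ)} μ :=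
    hint.integrableOn
  have hIA3 : IntegrableOn (fun ω => (W ω)^3) {ω | W ω ≤ (M:ℝ)} μ := hW3.integrableOn
  have hIAc : IntegrableOn (fun ω => (W ω)^3 * sgdd a (t * W ω)) {ω | W ω ≤ (M:ℝ)}ᶜ μ :=
    hint.integrableOn
  have hIAc3 : IntegrableOn (fun ω => (W ω)^3) {ω | W ω ≤ (M:ℝ)}ᶜ μ := hW3.integrableOn
  have hbound1 : ∫ ω in {ω | W ω ≤ (M:ℝ)}, c * (W ω)^3 ∂μ
      ≤ ∫ ω in {ω | W ω ≤ (M:ℝ)}, (W ω)^3 * sgdd a (t * W ω) ∂μ := by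
    apply setIntegral_mono_on (hIA3.const_mul c) hIA hA
    intro ω hω
    have hWω := hWnn ω
    have hx0 : 0 ≤ t * W ω := mul_nonneg ht0 hWω
    have hx1 : Real.exp (t * W ω) ≤ 3/2 := by
      rw [← Real.exp_log (by norm_num : (0:ℝ) < 3/2)]
      apply Real.exp_le_exp.2
      calc t * W ω ≤ t * M := mul_le_mul_of_nonneg_left hω ht0
      _ ≤ (Real.log (3/2) / M) * M := mul_le_mul_of_nonneg_right htδ hM0.le
      _ = Real.log (3/2) := by field_simp
    have hlow := sgdd_lower ha2 hx0 hx1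
    calc c * (W ω)^3 = (W ω)^3 * c := by ring
    _ ≤ (W ω)^3 * sgdd a (t * W ω) :=
      mul_le_mul_of_nonneg_left hlow (pow_nonneg hWω 3)
  have hbound2 : ∫ ω in {ω | W ω ≤ (M:ℝ)}ᶜ, (-(1/4)) * (W ω)^3 ∂μ
      ≤ ∫ ω in {ω | W ω ≤ (M:ℝ)}ᶜ, (W ω)^3 * sgdd a (t * W ω) ∂μ := by
    apply setIntegral_mono_on (hIAc3.const_mul _) hIAc hA.compl
    intro ω hω
    have h1 := abs_sgdd_le (x := t * W ω) ha
    have h2 : -(1/4 : ℝ) ≤ sgdd a (t * W ω) := by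
      have := abs_le.1 h1
      linarith [this.1]
    have hWω := hWnn ω
    calc (-(1/4)) * (W ω)^3 = (W ω)^3 * (-(1/4)) := by ring
    _ ≤ (W ω)^3 * sgdd a (t * W ω) := mul_le_mul_of_nonneg_left h2 (pow_nonneg hWω 3)
  -- compute pieces
  have htail_nonneg : 0 ≤ ∫ ω in {ω | W ω ≤ (M:ℝ)}ᶜ, (W ω)^3 ∂μ := by
    apply setIntegral_nonneg hA.compl
    intro ω _; exact pow_nonneg (hWnn ω) 3
  have hsum : ∫ ω in {ω | W ω ≤ (M:ℝ)}, (W ω)^3 ∂μ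
      + ∫ ω in {ω | W ω ≤ (M:ℝ)}ᶜ, (W ω)^3 ∂μ = E3 := integral_add_compl hA hW3
  have htail : ∫ ω in {ω | W ω ≤ (M:ℝ)}ᶜ, (W ω)^3 ∂μ < ε := by
    rw [hAc]; exact hMtail
  rw [integral_const_mul] at hbound1
  rw [integral_const_mul] at hbound2
  have hmain : 0 ≤ c * (E3 - ε) - (1/4) * ε := by
    have h1 : c * E3 - (c+1) * ε ≤ c * (E3 - ε) - (1/4) * ε := by nlinarith [hεpos, hcpos]
    have h2 : c * E3 - (c+1) * ε = 0 := by
      have hc1 : c + 1 ≠ 0 := ne_of_gt (by linarith)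
      rw [hε_def]; field_simp; ring
    linarith
  have hAge : c * (E3 - ε) ≤ c * ∫ ω in {ω | W ω ≤ (M:ℝ)}, (W ω)^3 ∂μ := by
    apply mul_le_mul_of_nonneg_left _ hcpos.le
    linarith
  have hsgn : -(1/4) * ε ≤ -(1/4) * ∫ ω in {ω | W ω ≤ (M:ℝ)}ᶜ, (W ω)^3 ∂μ := by
    nlinarith [htail]
  linarith [hsplit, hbound1, hbound2, hAge, hsgn, hmain]

include hWmeas hWnn hWint hW3 hq in
lemma Ffun_convex_near (hEW : 0 < ∫ ω, W ω ∂μ) (hsupp : 0 < μ {ω | 0 < W ω}) :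
    ∃ δ : ℝ, 0 < δ ∧ ConvexOn ℝ (Ioo 0 δ) (Ffun μ W q) := by
  obtain ⟨δ, hδpos, hδ⟩ := Phi3_nonneg_near hWmeas hWnn hWint hW3 hq hsupp
  have ha := ha0' hq
  -- Phi2 monotone on Icc 0 δ
  have hPhi2mono : MonotoneOn (Phi2 μ W q) (Icc 0 δ) := by
    apply monotoneOn_of_deriv_nonneg (convex_Icc 0 δ)
    · exact fun x _ => ((hasPhi2 hWmeas hWnn hWint hW3 hq x).differentiableAt).continuousAt.continuousWithinAt
    · exact fun x _ => ((hasPhi2 hWmeas hWnn hWint hW3 hq x).differentiableAt).differentiableWithinAt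
    · intro x hx
      rw [interior_Icc] at hx
      rw [(hasPhi2 hWmeas hWnn hWint hW3 hq x).deriv]
      exact hδ x hx.1.le hx.2.le
  -- Phi1 convex on Icc 0 δ
  have hPhi1conv : ConvexOn ℝ (Icc 0 δ) (Phi1 μ W q) := by
    apply MonotoneOn.convexOn_of_deriv (convex_Icc 0 δ)
    · exact fun x _ => ((hasPhi1 hWmeas hWnn hWint hW3 hq x).differentiableAt).continuousAt.continuousWithinAt
    · exact fun x hx => ((hasPhi1 hWmeas hWnn hWint hW3 hq x).differentiableAt).differentiableWithinAt
    · have hderiv : ∀ x, deriv (Phi1 μ W q) x = Phi2 μ W q x :=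
        fun x => (hasPhi1 hWmeas hWnn hWint hW3 hq x).deriv
      intro x hx y hy hxy
      rw [interior_Icc] at hx hy
      rw [hderiv, hderiv]
      exact hPhi2mono ⟨hx.1.le, hx.2.le⟩ ⟨hy.1.le, hy.2.le⟩ hxy
  -- transfer to Ffun
  have hc : (0:ℝ) ≤ (q:ℝ)/(((q:ℝ)-1) * (∫ ω, W ω ∂μ)) := by
    apply div_nonneg (by positivity)
    exact (mul_pos ha hEW).le
  have hrepr : Ffun μ W q = fun t =>
      ((q:ℝ)/(((q:ℝ)-1) * (∫ ω, W ω ∂μ))) • Phi1 μ W q t + (-(1/((q:ℝ)-1))) :=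
    funext fun t => by rw [Ffun_eq hWmeas hWnn hWint hq hEW t, smul_eq_mul]; ring
  refine ⟨δ, hδpos, ?_⟩
  rw [hrepr]
  exact ((hPhi1conv.smul hc).add_const _).subset Ioo_subset_Icc_self (convex_Ioo 0 δ)

include hWmeas hWnn hWint hW3 hq in
lemma S_bddAbove (hEW : 0 < ∫ ω, W ω ∂μ) (hsupp : 0 < μ {ω | 0 < W ω}) :
    BddAbove {s : ℝ | 0 < s ∧ ConvexOn ℝ (Ioo 0 s) (Ffun μ W q)} := by
  set a1 := Ffun μ W q 1 with ha1_def
  have ha1pos : 0 < a1 := Ffun_pos hWmeas hWnn hWint hq hEW hsupp one_pos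
  -- find ε ∈ (0,1) with Ffun ε < a1/2
  have hcont := Ffun_cont hWmeas hWnn hWint hW3 hq hEW
  have hc0 : ContinuousAt (Ffun μ W q) 0 := hcont.continuousAt
  rw [Metric.continuousAt_iff] at hc0
  obtain ⟨δ', hδ'pos, hδ'⟩ := hc0 (a1/2) (by linarith)
  set ε : ℝ := min (δ'/2) (1/2) with hε_def
  have hεpos : 0 < ε := lt_min (by linarith) (by norm_num)
  have hεlt1 : ε < 1 := lt_of_le_of_lt (min_le_right _ _) (by norm_num)
  have hFε : Ffun μ W q ε < a1/2 := by
    have hd : dist ε 0 < δ' := by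
      rw [Real.dist_eq, sub_zero, abs_of_pos hεpos]
      calc ε ≤ δ'/2 := min_le_left _ _
      _ < δ' := by linarith
    have := hδ' hd
    rw [Real.dist_eq, Ffun_zero hWmeas hWnn hWint hq, sub_zero] at this
    calc Ffun μ W q ε ≤ |Ffun μ W q ε| := le_abs_self _
    _ < a1/2 := this
  refine ⟨2 + 4/a1, ?_⟩
  intro s hs
  obtain ⟨hspos, hsconv⟩ := hs
  by_contra hcon
  push_neg at hcon
  obtain ⟨t, ht_def⟩ : ∃ t : ℝ, t = 1 + 4/a1 := ⟨_, rfl⟩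
  have h4 : 0 < 4/a1 := by positivity
  have ht1 : 1 < t := by rw [ht_def]; linarith
  have hts : t < s := by
    have h' : t < 2 + 4/a1 := by rw [ht_def]; linarith
    linarith
  have hslope := hsconv.slope_mono_adjacent
    (x := ε) (y := 1) (z := t)
    ⟨hεpos, by linarith⟩ ⟨by linarith, hts⟩ hεlt1 ht1
  -- (a1 - Ffun ε)/(1-ε) ≤ (Ffun t - a1)/(t-1)
  have h1ε : 0 < 1 - ε := by linarith
  have ht1' : 0 < t - 1 := by linarith
  have hlhs : a1/2 ≤ (Ffun μ W q 1 - Ffun μ W q ε)/(1-ε) := by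
    rw [le_div_iff₀ h1ε]
    have hnum : a1/2 ≤ Ffun μ W q 1 - Ffun μ W q ε := by
      rw [← ha1_def]; linarith
    nlinarith [ha1pos, hnum, h1ε, hεpos]
  have hFt : Ffun μ W q t < 1 := Ffun_lt_one hWmeas hWnn hWint hq hEW hsupp t
  have hkey : a1/2 ≤ (Ffun μ W q t - Ffun μ W q 1)/(t-1) := le_trans hlhs hslope
  rw [le_div_iff₀ ht1'] at hkey
  have : a1/2 * (t-1) = 2 := by
    rw [ht_def]
    field_simp
    ring
  rw [← ha1_def] at hkey
  nlinarith [hkey, ha1pos, hFt]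

include hWmeas hWnn hWint hW3 hq in
lemma tconv_pos' (hEW : 0 < ∫ ω, W ω ∂μ) (hsupp : 0 < μ {ω | 0 < W ω}) :
    0 < tconv μ W q := by
  obtain ⟨δ, hδpos, hδconv⟩ := Ffun_convex_near hWmeas hWnn hWint hW3 hq hEW hsupp
  have hmem : δ ∈ {s : ℝ | 0 < s ∧ ConvexOn ℝ (Ioo 0 s) (Ffun μ W q)} := ⟨hδpos, hδconv⟩
  have := le_csSup (S_bddAbove hWmeas hWnn hWint hW3 hq hEW hsupp) hmem
  calc (0:ℝ) < δ := hδpos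
  _ ≤ tconv μ W q := this


end Int

-- generic convex-ratio lemma
lemma ratio_mono {G : ℝ → ℝ} {c : ℝ} (hG : ConvexOn ℝ (Ioo 0 c) G)
    (hcont : Continuous G) (h0 : G 0 = 0) {s₁ s₂ : ℝ}
    (hs₁ : 0 < s₁) (h12 : s₁ < s₂) (h2c : s₂ < c) : G s₁ * s₂ ≤ G s₂ * s₁ := by
  have key : ∀ ε ∈ Ioo (0:ℝ) s₁,
      (G s₁ - G ε) / (s₁ - ε) ≤ (G s₂ - G s₁) / (s₂ - s₁) := by
    intro ε hε
    exact hG.slope_mono_adjacent ⟨hε.1, by linarith [hε.2]⟩ ⟨by linarith [hε.1], h2c⟩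
      hε.2 h12
  have T : Tendsto (fun ε => (G s₁ - G ε) / (s₁ - ε)) (nhdsWithin 0 (Ioi 0))
      (nhds ((G s₁ - G 0) / (s₁ - 0))) := by
    apply Tendsto.div
    · exact (tendsto_const_nhds.sub ((hcont.tendsto 0).mono_left nhdsWithin_le_nhds))
    · exact tendsto_const_nhds.sub (tendsto_id.mono_left nhdsWithin_le_nhds)
    · simpa using ne_of_gt hs₁
  have hev : ∀ᶠ ε in nhdsWithin (0:ℝ) (Ioi 0),
      (G s₁ - G ε) / (s₁ - ε) ≤ (G s₂ - G s₁) / (s₂ - s₁) := by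
    filter_upwards [Ioo_mem_nhdsGT_of_mem (by constructor <;> linarith : (0:ℝ) ∈ Ico 0 s₁)]
      with ε hε using key ε hε
  have hlim := le_of_tendsto T hev
  rw [h0, sub_zero, sub_zero] at hlim
  rw [div_le_div_iff₀ hs₁ (by linarith)] at hlim
  nlinarith [hlim]

/-- **General first-order phase transition** when `E[W³] < ∞` and `q ≥ 3`, in zero
field: `t_conv > 0`, and there is a critical value `β_c ∈ (0,∞)` such that for
`β < β_c` the unique maximizer of `p_{β,0}` on `[0,1]` is `s = 0`, while for `β > β_c`
every maximizer satisfies `s ≥ t_conv/β' > 0`; thus the optimal value jumps at `β_c`. -/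
theorem general_first_order_phase_transition
    {Ω : Type*} [MeasurableSpace Ω] (μ : Measure Ω) [IsProbabilityMeasure μ]
    (W : Ω → ℝ) (hWmeas : Measurable W) (hWnn : ∀ ω, 0 ≤ W ω)
    (hWint : Integrable W μ) (hEW : 0 < ∫ ω, W ω ∂μ)
    (hW3 : Integrable (fun ω => (W ω) ^ 3) μ)
    (q : ℕ) (hq : 3 ≤ q) :
    0 < tconv μ W q ∧
    ∃ βc : ℝ, 0 < βc ∧
      (∀ β : ℝ, 0 < β → β < βc →
        (∀ t ∈ Icc (0 : ℝ) 1, pfun μ W q β t ≤ pfun μ W q β 0) ∧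
        (∀ s ∈ Icc (0 : ℝ) 1,
          (∀ t ∈ Icc (0 : ℝ) 1, pfun μ W q β t ≤ pfun μ W q β s) → s = 0)) ∧
      (∀ β : ℝ, βc < β → ∀ s ∈ Icc (0 : ℝ) 1,
        (∀ t ∈ Icc (0 : ℝ) 1, pfun μ W q β t ≤ pfun μ W q β s) →
        tconv μ W q / (Real.exp β - 1) ≤ s) := by
  have hsupp : 0 < μ {ω | 0 < W ω} := suppW_pos hWnn hWint hEW
  have ha := ha0' (q := q) hq
  have ha2 := ha2' (q := q) hq
  have hq0 : (0:ℝ) < (q:ℝ) := by linarith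
  refine ⟨tconv_pos' hWmeas hWnn hWint hW3 hq hEW hsupp, ?_⟩
  -- the H function
  obtain ⟨C, hC_def⟩ : ∃ C : ℝ → ℝ, C = fun s => (∫ ω, W ω ∂μ)/(2*q)*(((q:ℝ)-1)*s^2+2*s)
    := ⟨_, rfl⟩
  obtain ⟨H, hH_def⟩ : ∃ H : ℝ → ℝ → ℝ, H = fun s b => Phi0 μ W q (b*s) - Real.log q - b * C s
    := ⟨_, rfl⟩
  have hΔ : ∀ β s : ℝ, pfun μ W q β s - pfun μ W q β 0 = H s (Real.exp β - 1) := by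
    intro β s
    rw [pfun_eq hWmeas hWnn hWint hq β s, pfun_eq hWmeas hWnn hWint hq β 0]
    simp only [hH_def, hC_def]
    rw [mul_zero, Phi0_zero hq]
    ring
  have hH0 : ∀ s : ℝ, H s 0 = 0 := by
    intro s
    simp only [hH_def]
    rw [zero_mul, Phi0_zero hq, zero_mul]
    ring
  have hder : ∀ s b : ℝ, HasDerivAt (fun b => H s b) (s * Phi1 μ W q (b*s) - C s) b := by
    intro s b
    rw [hH_def]
    have h1 : HasDerivAt (fun b : ℝ => b * s) s b := hasDerivAt_mul_const s
    have h2 := (hasPhi0 hWmeas hWnn hWint hq (b*s)).comp b h1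
    have h3 : HasDerivAt (fun b : ℝ => b * C s) (C s) b := hasDerivAt_mul_const _
    have h4 := (h2.sub_const (Real.log q)).sub h3
    refine h4.congr_deriv ?_
    ring
  have hconvH : ∀ s : ℝ, 0 < s → StrictConvexOn ℝ univ (fun b => H s b) := by
    intro s hs
    apply StrictMonoOn.strictConvexOn_of_deriv convex_univ
    · exact fun b _ => ((hder s b).differentiableAt).continuousAt.continuousWithinAt
    · rw [interior_univ]
      intro b₁ _ b₂ _ hb
      rw [(hder s b₁).deriv, (hder s b₂).deriv]
      have hmono := Phi1_strictMono hWmeas hWnn hWint hq hsupp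
        (mul_lt_mul_of_pos_right hb hs : b₁*s < b₂*s)
      have := mul_lt_mul_of_pos_left hmono hs
      linarith
  have hslope : ∀ s btil b : ℝ, 0 < s → 0 < btil → btil < b → 0 ≤ H s btil → 0 < H s b := by
    intro s btil b hs hbtil hbb hH
    have hb : 0 < b := lt_trans hbtil hbb
    have hsc := hconvH s hs
    have hfrac : 0 < btil/b := div_pos hbtil hb
    have hfrac1 : btil/b < 1 := (div_lt_one hb).2 hbb
    have h3 := hsc.2 (mem_univ (0:ℝ)) (mem_univ b) (by intro hc; rw [← hc] at hb; linarith)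
      (by linarith : 0 < 1 - btil/b) hfrac (by ring)
    simp only [smul_eq_mul, mul_zero, zero_add] at h3
    have he : btil/b*b = btil := by field_simp
    rw [he, hH0 s] at h3
    rw [mul_zero, zero_add] at h3
    by_contra hc
    push_neg at hc
    have h7 : btil/b * H s b ≤ 0 := mul_nonpos_iff.2 (Or.inl ⟨hfrac.le, hc⟩)
    linarith [h3, hH, h7]
  -- the set A
  obtain ⟨A, hA_def⟩ : ∃ A : Set ℝ,
      A = {β | 0 < β ∧ ∀ s : ℝ, 0 < s → s ≤ 1 → H s (Real.exp β - 1) < 0} := ⟨_, rfl⟩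
  have hE2pos : 0 < ∫ ω, (W ω)^2 ∂μ :=
    int_pos_of hsupp (intW2 hWmeas hWnn hWint hW3) (fun ω => sq_nonneg _)
      (fun ω hω => by positivity)
  have hquad : ∀ b s : ℝ, 0 ≤ b → 0 ≤ s → H s b
      ≤ b * s^2 * (b * (∫ ω, (W ω)^2 ∂μ)/2 - (∫ ω, W ω ∂μ)*((q:ℝ)-1)/(2*q)) := by
    intro b s hb hs
    have h1 := Phi0_quad hWmeas hWnn hWint hW3 hq (b*s) (mul_nonneg hb hs)
    simp only [hH_def, hC_def]
    have : (b*s)/q * (∫ ω, W ω ∂μ) - b * ((∫ ω, W ω ∂μ)/(2*q)*(((q:ℝ)-1)*s^2+2*s))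
        + (b*s)^2/2 * (∫ ω, (W ω)^2 ∂μ)
        = b * s^2 * (b * (∫ ω, (W ω)^2 ∂μ)/2 - (∫ ω, W ω ∂μ)*((q:ℝ)-1)/(2*q)) := by
      field_simp
      ring
    linarith [h1, this]
  -- A is nonempty
  obtain ⟨bhat, hbhat_def⟩ : ∃ x : ℝ, x = min ((∫ ω, W ω ∂μ)*((q:ℝ)-1)/(2*q*(∫ ω, (W ω)^2 ∂μ))) 1
    := ⟨_, rfl⟩
  have hbhatpos : 0 < bhat := by
    rw [hbhat_def]
    apply lt_min _ one_pos
    apply div_pos (mul_pos hEW ha) (by positivity)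
  have hbhatneg : bhat * (∫ ω, (W ω)^2 ∂μ)/2 - (∫ ω, W ω ∂μ)*((q:ℝ)-1)/(2*q) < 0 := by
    have h1 : bhat ≤ (∫ ω, W ω ∂μ)*((q:ℝ)-1)/(2*q*(∫ ω, (W ω)^2 ∂μ)) := by
      rw [hbhat_def]; exact min_le_left _ _
    have h2 : bhat * (∫ ω, (W ω)^2 ∂μ) ≤ (∫ ω, W ω ∂μ)*((q:ℝ)-1)/(2*q) := by
      calc bhat * (∫ ω, (W ω)^2 ∂μ)
          ≤ ((∫ ω, W ω ∂μ)*((q:ℝ)-1)/(2*q*(∫ ω, (W ω)^2 ∂μ))) * (∫ ω, (W ω)^2 ∂μ) :=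
            mul_le_mul_of_nonneg_right h1 hE2pos.le
      _ = (∫ ω, W ω ∂μ)*((q:ℝ)-1)/(2*q) := by
            rw [div_mul_eq_mul_div, mul_comm (2*(q:ℝ)) _, ← div_div, mul_div_assoc,
              div_self hE2pos.ne', mul_one]
    have h3 : 0 < (∫ ω, W ω ∂μ)*((q:ℝ)-1)/(2*q) := by positivity
    linarith
  obtain ⟨bhatβ, hbhatβ_def⟩ : ∃ x : ℝ, x = Real.log (1 + bhat) := ⟨_, rfl⟩
  have hbhatβpos : 0 < bhatβ := by
    rw [hbhatβ_def]; exact Real.log_pos (by linarith)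
  have hbhatβexp : Real.exp bhatβ - 1 = bhat := by
    rw [hbhatβ_def, Real.exp_log (by linarith)]; ring
  have hbhatβmem : bhatβ ∈ A := by
    rw [hA_def, mem_setOf_eq]
    refine ⟨hbhatβpos, fun s hs hs1 => ?_⟩
    rw [hbhatβexp]
    have h1 := hquad bhat s hbhatpos.le hs.le
    have h2 : bhat * s^2 * (bhat * (∫ ω, (W ω)^2 ∂μ)/2
        - (∫ ω, W ω ∂μ)*((q:ℝ)-1)/(2*q)) < 0 := by
      apply mul_neg_of_pos_of_neg _ hbhatneg
      positivity
    linarith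
  -- A is bounded above
  have hAbdd : BddAbove A := by
    obtain ⟨bL, hbL_def⟩ : ∃ x : ℝ, x = max (2*q*Real.log q/((∫ ω, W ω ∂μ)*((q:ℝ)-1))) 1
      := ⟨_, rfl⟩
    refine ⟨Real.log (1 + bL), ?_⟩
    intro β hβ
    rw [hA_def, mem_setOf_eq] at hβ
    obtain ⟨hβpos, hβprop⟩ := hβ
    have hb : 0 < Real.exp β - 1 := by
      have := Real.exp_lt_exp.2 hβpos
      rw [Real.exp_zero] at this
      linarith
    have hcon : Real.exp β - 1 < bL := by
      by_contra hc
      push_neg at hc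
      have h1 := hβprop 1 one_pos le_rfl
      have h2 : 0 ≤ H 1 (Real.exp β - 1) := by
        simp only [hH_def, hC_def]
        have h3 := Phi0_ge hWmeas hWnn hWint hq (Real.exp β - 1)
        have h4 : ((Real.exp β - 1)*1) = (Real.exp β - 1) := mul_one _
        rw [h4]
        have h5 : 2*q*Real.log q/((∫ ω, W ω ∂μ)*((q:ℝ)-1)) ≤ Real.exp β - 1 :=
          le_trans (le_max_left _ _) (hbL_def ▸ hc)
        have h6 : Real.log q ≤ (Real.exp β - 1) * (∫ ω, W ω ∂μ)*((q:ℝ)-1)/(2*q) := by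
          rw [div_le_iff₀ (by positivity : (0:ℝ) < (∫ ω, W ω ∂μ)*((q:ℝ)-1))] at h5
          rw [← sub_nonneg]
          have : (Real.exp β - 1) * (∫ ω, W ω ∂μ)*((q:ℝ)-1)/(2*q) - Real.log q
              = ((Real.exp β - 1) * ((∫ ω, W ω ∂μ)*((q:ℝ)-1)) - 2*q*Real.log q)/(2*q) := by
            field_simp
          rw [this]
          apply div_nonneg _ (by positivity)
          linarith
        have h7 : (Real.exp β - 1) * ((∫ ω, W ω ∂μ)/(2*q)*(((q:ℝ)-1)*1^2+2*1))
            = (Real.exp β - 1)*(∫ ω, W ω ∂μ)*((q:ℝ)+1)/(2*q) := by field_simp; ring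
        rw [h7]
        have h8 : (Real.exp β - 1)*(∫ ω, W ω ∂μ)
            - (Real.exp β - 1)*(∫ ω, W ω ∂μ)*((q:ℝ)+1)/(2*q)
            = (Real.exp β - 1)*(∫ ω, W ω ∂μ)*((q:ℝ)-1)/(2*q) := by
          field_simp; ring
        linarith [h3, h6, h8]
      linarith
    have : Real.exp β < 1 + bL := by linarith
    calc β = Real.log (Real.exp β) := (Real.log_exp β).symm
    _ ≤ Real.log (1 + bL) := Real.log_le_log (Real.exp_pos β) this.le
  -- βc
  obtain ⟨βc, hβc_def⟩ : ∃ x : ℝ, x = sSup A := ⟨_, rfl⟩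
  have hβcpos : 0 < βc := by
    rw [hβc_def]
    exact lt_of_lt_of_le hbhatβpos (le_csSup hAbdd hbhatβmem)
  refine ⟨βc, hβcpos, ?_, ?_⟩
  · -- subcritical
    intro β hβpos hβlt
    have hβA : 0 < β ∧ ∀ s : ℝ, 0 < s → s ≤ 1 → H s (Real.exp β - 1) < 0 := by
      obtain ⟨β', hβ'A, hββ'⟩ := exists_lt_of_lt_csSup ⟨bhatβ, hbhatβmem⟩ (hβc_def ▸ hβlt)
      rw [hA_def, mem_setOf_eq] at hβ'A
      refine ⟨hβpos, fun s hs hs1 => ?_⟩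
      by_contra hcon
      push_neg at hcon
      have hb : 0 < Real.exp β - 1 := by
        have := Real.exp_lt_exp.2 hβpos
        rw [Real.exp_zero] at this; linarith
      have hbb : Real.exp β - 1 < Real.exp β' - 1 := by
        have := Real.exp_lt_exp.2 hββ'; linarith
      have := hslope s _ _ hs hb hbb hcon
      exact absurd this (not_lt.2 (le_of_lt (hβ'A.2 s hs hs1)))
    constructor
    · intro t ht
      rcases eq_or_lt_of_le ht.1 with h0 | h0
      · rw [← h0]
      · have h1 := hβA.2 t h0 ht.2
        linarith [hΔ β t]
    · intro s hsIcc hmax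
      by_contra hne
      have hs0 : 0 < s := lt_of_le_of_ne hsIcc.1 (Ne.symm hne)
      have h1 := hβA.2 s hs0 hsIcc.2
      have h2 := hmax 0 ⟨le_refl 0, zero_le_one⟩
      linarith [hΔ β s]
  · -- supercritical
    intro β hβgt s hsIcc hmax
    have hβpos : 0 < β := lt_trans hβcpos (hβc_def ▸ hβgt)
    have hb : 0 < Real.exp β - 1 := by
      have := Real.exp_lt_exp.2 hβpos
      rw [Real.exp_zero] at this; linarith
    -- find s₁ with nonneg H at β̃
    obtain ⟨βt, hβt_def⟩ : ∃ x : ℝ, x = (βc + β)/2 := ⟨_, rfl⟩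
    have hβt1 : βc < βt := by rw [hβt_def]; linarith [hβc_def ▸ hβgt]
    have hβt2 : βt < β := by rw [hβt_def]; linarith [hβc_def ▸ hβgt]
    have hβtpos : 0 < βt := lt_trans hβcpos hβt1
    have hβtnA : ¬ (0 < βt ∧ ∀ s : ℝ, 0 < s → s ≤ 1 → H s (Real.exp βt - 1) < 0) := by
      intro hmem
      have hmem' : βt ∈ A := by rw [hA_def]; exact hmem
      have := le_csSup hAbdd hmem'
      rw [← hβc_def] at this
      linarith
    have hex : ∃ s₁ : ℝ, 0 < s₁ ∧ s₁ ≤ 1 ∧ 0 ≤ H s₁ (Real.exp βt - 1) := by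
      by_contra hcon
      push_neg at hcon
      exact hβtnA ⟨hβtpos, fun s hs hs1 => hcon s hs hs1⟩
    obtain ⟨s₁, hs₁pos, hs₁le, hs₁H⟩ := hex
    have hbtpos : 0 < Real.exp βt - 1 := by
      have := Real.exp_lt_exp.2 hβtpos
      rw [Real.exp_zero] at this; linarith
    have hbtb : Real.exp βt - 1 < Real.exp β - 1 := by
      have := Real.exp_lt_exp.2 hβt2; linarith
    have hHpos : 0 < H s₁ (Real.exp β - 1) := hslope s₁ _ _ hs₁pos hbtpos hbtb hs₁H
    have hp₁ : pfun μ W q β 0 < pfun μ W q β s₁ := by linarith [hΔ β s₁]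
    have hple : pfun μ W q β s₁ ≤ pfun μ W q β s := hmax s₁ ⟨hs₁pos.le, hs₁le⟩
    have hp0 : pfun μ W q β 0 < pfun μ W q β s := lt_of_lt_of_le hp₁ hple
    have hspos : 0 < s := by
      rcases eq_or_lt_of_le hsIcc.1 with h0 | h0
      · exfalso; rw [← h0] at hp0; exact lt_irrefl _ hp0
      · exact h0
    by_contra hcon
    push_neg at hcon
    have hbs : (Real.exp β - 1) * s < tconv μ W q := by
      rw [lt_div_iff₀ hb] at hcon
      linarith [hcon]
    -- convexity of Ffun on (0, u)
    obtain ⟨δ₀, hδ₀pos, hδ₀conv⟩ := Ffun_convex_near hWmeas hWnn hWint hW3 hq hEW hsupp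
    rw [show tconv μ W q = sSup {s : ℝ | 0 < s ∧ ConvexOn ℝ (Ioo 0 s) (Ffun μ W q)} from rfl]
      at hbs
    obtain ⟨u, huS, hbsu⟩ := exists_lt_of_lt_csSup
      ⟨δ₀, (show δ₀ ∈ {s : ℝ | 0 < s ∧ ConvexOn ℝ (Ioo 0 s) (Ffun μ W q)}
        from ⟨hδ₀pos, hδ₀conv⟩)⟩ hbs
    obtain ⟨hupos, huconv⟩ := huS
    have hFcont := Ffun_cont hWmeas hWnn hWint hW3 hq hEW
    have hF0 := Ffun_zero hWmeas hWnn hWint hq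
    -- derivative of pfun in s
    have hp : ∀ x : ℝ, HasDerivAt (fun y => pfun μ W q β y)
        ((Real.exp β - 1)*((q:ℝ)-1)*(∫ ω, W ω ∂μ)/q
          * (Ffun μ W q ((Real.exp β - 1)*x) - x)) x := by
      intro x
      have hrep : (fun y => pfun μ W q β y) = fun y => Phi0 μ W q ((Real.exp β - 1)*y)
          - (Real.exp β - 1) * (∫ ω, W ω ∂μ) / (2*q) * (((q:ℝ)-1)*y^2 + 2*y - 1) :=
        funext fun y => pfun_eq hWmeas hWnn hWint hq β y
      rw [hrep]
      have h1 : HasDerivAt (fun y : ℝ => (Real.exp β - 1)*y) (Real.exp β - 1) x := by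
        simpa using (hasDerivAt_id x).const_mul (Real.exp β - 1)
      have h2 := (hasPhi0 hWmeas hWnn hWint hq ((Real.exp β - 1)*x)).comp x h1
      have h3 : HasDerivAt (fun y : ℝ => (Real.exp β - 1) * (∫ ω, W ω ∂μ) / (2*q)
          * (((q:ℝ)-1)*y^2 + 2*y - 1))
          ((Real.exp β - 1) * (∫ ω, W ω ∂μ) / (2*q) * (2*((q:ℝ)-1)*x + 2)) x := by
        have h4 : HasDerivAt (fun y : ℝ => ((q:ℝ)-1)*y^2 + 2*y - 1)
            (2*((q:ℝ)-1)*x + 2) x := by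
          have h5 := (((hasDerivAt_pow 2 x).const_mul ((q:ℝ)-1)).add
            ((hasDerivAt_id x).const_mul 2)).sub_const 1
          refine h5.congr_deriv ?_
          simp
          ring
        exact h4.const_mul _
      have h6 := h2.sub h3
      have heq : Phi1 μ W q ((Real.exp β - 1)*x) * (Real.exp β - 1)
          - (Real.exp β - 1) * (∫ ω, W ω ∂μ) / (2*q) * (2*((q:ℝ)-1)*x + 2)
          = (Real.exp β - 1)*((q:ℝ)-1)*(∫ ω, W ω ∂μ)/q
            * (Ffun μ W q ((Real.exp β - 1)*x) - x) := by
        rw [Ffun_eq hWmeas hWnn hWint hq hEW ((Real.exp β - 1)*x)]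
        field_simp
        ring
      rw [← heq]
      exact h6
    have hpcont : Continuous (fun y => pfun μ W q β y) :=
      Differentiable.continuous (fun x => (hp x).differentiableAt)
    -- coefficient positivity
    have hK : 0 < (Real.exp β - 1)*((q:ℝ)-1)*(∫ ω, W ω ∂μ)/q := by positivity
    -- existence of sb with Ffun((e^β-1) sb) > sb
    have hsbar : ∃ sb : ℝ, 0 < sb ∧ sb ≤ s ∧ sb < Ffun μ W q ((Real.exp β - 1)*sb) := by
      by_contra hcon2
      push_neg at hcon2
      have hanti : AntitoneOn (fun y => pfun μ W q β y) (Icc 0 s) := by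
        apply antitoneOn_of_deriv_nonpos (convex_Icc 0 s)
        · exact hpcont.continuousOn
        · exact fun x _ => (hp x).differentiableAt.differentiableWithinAt
        · intro x hx
          rw [interior_Icc] at hx
          rw [(hp x).deriv]
          apply mul_nonpos_of_nonneg_of_nonpos hK.le
          have := hcon2 x hx.1 hx.2.le
          linarith
      have := hanti (⟨le_refl 0, hspos.le⟩ : (0:ℝ) ∈ Icc 0 s)
        (⟨hspos.le, le_refl s⟩ : s ∈ Icc 0 s) hspos.le
      simp only at this
      linarith [hp0]
    obtain ⟨sb, hsbpos, hsble, hsbF⟩ := hsbar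
    rcases eq_or_lt_of_le hsIcc.2 with hs1 | hs1
    · -- s = 1
      have hbu : (Real.exp β - 1) < u := by
        rw [hs1] at hbsu
        simpa using hbsu
      rcases eq_or_lt_of_le hsble with hsb1 | hsb1
      · -- sb = s = 1
        have := Ffun_lt_one hWmeas hWnn hWint hq hEW hsupp ((Real.exp β - 1)*sb)
        rw [hsb1, hs1] at hsbF
        rw [hsb1, hs1] at this
        linarith [hsbF, this]
      · -- sb < s = 1
        have hsb1' : sb < 1 := hs1 ▸ hsb1
        have hr := ratio_mono huconv hFcont hF0
          (mul_pos hb hsbpos)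
          (mul_lt_mul_of_pos_left hsb1' hb)
          (by rw [mul_one]; exact hbu)
        have hF1 := Ffun_lt_one hWmeas hWnn hWint hq hEW hsupp ((Real.exp β - 1)*1)
        linarith [hr, mul_lt_mul_of_pos_right hsbF hb,
          mul_lt_mul_of_pos_right hF1 (mul_pos hb hsbpos)]
    · -- s < 1
      obtain ⟨sp, hsp_def⟩ : ∃ x : ℝ, x = min 1 ((s + u/(Real.exp β - 1))/2) := ⟨_, rfl⟩
      have hsu : s < u/(Real.exp β - 1) := by
        rw [lt_div_iff₀ hb]
        linarith [hbs, hbsu]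
      have hssp : s < sp := by
        rw [hsp_def]
        apply lt_min hs1
        linarith
      have hsple : sp ≤ 1 := by rw [hsp_def]; exact min_le_left _ _
      have hbspu : (Real.exp β - 1)*sp < u := by
        have h1 : sp ≤ (s + u/(Real.exp β - 1))/2 := by rw [hsp_def]; exact min_le_right _ _
        have h2 : (s + u/(Real.exp β - 1))/2 < u/(Real.exp β - 1) := by linarith
        have h3 : sp < u/(Real.exp β - 1) := lt_of_le_of_lt h1 h2
        rw [lt_div_iff₀ hb] at h3
        linarith [h3]
      have hmono : StrictMonoOn (fun y => pfun μ W q β y) (Icc s sp) := by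
        apply strictMonoOn_of_deriv_pos (convex_Icc s sp)
        · exact hpcont.continuousOn
        · intro x hx
          rw [interior_Icc] at hx
          rw [(hp x).deriv]
          apply mul_pos hK
          have hxs : sb < x := lt_of_le_of_lt hsble hx.1
          have hr := ratio_mono huconv hFcont hF0
            (mul_pos hb hsbpos)
            (mul_lt_mul_of_pos_left hxs hb)
            (lt_of_le_of_lt (mul_le_mul_of_nonneg_left hx.2.le hb.le) hbspu)
          have hxpos : 0 < x := lt_trans hsbpos hxs
          rw [sub_pos]
          nlinarith [hr, mul_lt_mul_of_pos_right hsbF (mul_pos hb hxpos),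
            mul_pos hb hsbpos]
      have h1 := hmono (⟨le_refl s, hssp.le⟩ : s ∈ Icc s sp)
        (⟨hssp.le, le_refl sp⟩ : sp ∈ Icc s sp) hssp
      have h2 := hmax sp ⟨le_trans hspos.le hssp.le, hsple⟩
      simp only at h1
      linarith
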